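/- arXiv:2203.05102 — 6 statements merged into one kernel-verified Lean document; each statement's English description precedes it below -/
import Mathlib

section
/- For all integers N2 > N1 ≥ 1 and T ≥ N1 + N2, the rational number min(R1, R2) is strictly greater than (T+1−N1−N2)/(T+1−N1), where R1 = (T+1−N1−N2)/(T+1−N2) and R2 = (T+1−N2)/(T+1+Σ_{i=0}^{N1} (N1−i)/(T+1−N2−(N1−i))). -/
theorem stmt_2 (N1 N2 T : ℕ) (hN1 : 1 ≤ N1) (hN12 : N1 < N2) (hT : N1 + N2 ≤ T) :
    min (((T : ℚ) + 1 - N1 - N2) / ((T : ℚ) + 1 - N2))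
      (((T : ℚ) + 1 - N2) /
        ((T : ℚ) + 1 + ∑ i ∈ Finset.range (N1 + 1),
          ((N1 : ℚ) - i) / ((T : ℚ) + 1 - N2 - ((N1 : ℚ) - i)))) >
    ((T : ℚ) + 1 - N1 - N2) / ((T : ℚ) + 1 - N1) := by
  have hN1' : (1:ℚ) ≤ N1 := by exact_mod_cast hN1
  have hN2' : (N1:ℚ) + 1 ≤ N2 := by exact_mod_cast hN12
  have hT' : (N1:ℚ) + N2 ≤ T := by exact_mod_cast hT
  set a : ℚ := (T:ℚ) + 1 - N1 - N2 with ha_def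
  have ha : 1 ≤ a := by rw [ha_def]; linarith
  have ha0 : 0 < a := by linarith
  set S : ℚ := ∑ i ∈ Finset.range (N1 + 1),
      ((N1 : ℚ) - i) / ((T : ℚ) + 1 - N2 - ((N1 : ℚ) - i)) with hS_def
  -- each term is nonneg and ≤ (N1 - i)/a
  have hterm : ∀ i ∈ Finset.range (N1 + 1),
      ((N1 : ℚ) - i) / ((T : ℚ) + 1 - N2 - ((N1 : ℚ) - i)) ≤ ((N1:ℚ) - i) / a := by
    intro i hi
    have hi' : (i:ℚ) ≤ N1 := by
      have := Finset.mem_range.mp hi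
      exact_mod_cast Nat.lt_succ_iff.mp this
    have hiz : (0:ℚ) ≤ i := by positivity
    have hden : (T:ℚ) + 1 - N2 - ((N1:ℚ) - i) = a + i := by rw [ha_def]; ring
    rw [hden]
    apply div_le_div_of_nonneg_left (by linarith) ha0 (by linarith)
  have htermnn : ∀ i ∈ Finset.range (N1 + 1),
      (0:ℚ) ≤ ((N1 : ℚ) - i) / ((T : ℚ) + 1 - N2 - ((N1 : ℚ) - i)) := by
    intro i hi
    have hi' : (i:ℚ) ≤ N1 := by
      have := Finset.mem_range.mp hi
      exact_mod_cast Nat.lt_succ_iff.mp this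
    have hiz : (0:ℚ) ≤ i := by positivity
    have hden : (T:ℚ) + 1 - N2 - ((N1:ℚ) - i) = a + i := by rw [ha_def]; ring
    rw [hden]
    apply div_nonneg (by linarith) (by linarith)
  have hS0 : 0 ≤ S := Finset.sum_nonneg htermnn
  -- Gauss sum
  have hgauss : (∑ i ∈ Finset.range (N1 + 1), ((N1:ℚ) - i)) = N1 * (N1 + 1) / 2 := by
    have h1 : (∑ i ∈ Finset.range (N1 + 1), (i:ℚ)) * 2 = (N1 + 1) * N1 := by
      have h := Finset.sum_range_id_mul_two (N1 + 1)
      simp only [Nat.add_sub_cancel] at h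
      have h' := congrArg (Nat.cast : ℕ → ℚ) h
      push_cast at h'
      linarith
    rw [Finset.sum_sub_distrib, Finset.sum_const, Finset.card_range]
    push_cast [nsmul_eq_mul]
    linarith
  have hSle : S ≤ N1 * (N1 + 1) / 2 / a := by
    calc S ≤ ∑ i ∈ Finset.range (N1 + 1), ((N1:ℚ) - i) / a :=
          Finset.sum_le_sum hterm
    _ = (∑ i ∈ Finset.range (N1 + 1), ((N1:ℚ) - i)) / a := by
          rw [Finset.sum_div]
    _ = N1 * (N1 + 1) / 2 / a := by rw [hgauss]
  have haS : a * S ≤ N1 * (N1 + 1) / 2 := by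
    have := mul_le_mul_of_nonneg_left hSle (le_of_lt ha0)
    rwa [mul_div_cancel₀ _ (ne_of_gt ha0)] at this
  have e1 : (T:ℚ) + 1 - N2 = a + N1 := by rw [ha_def]; ring
  have e2 : (T:ℚ) + 1 - N1 = a + N2 := by rw [ha_def]; ring
  have e3 : (T:ℚ) + 1 + S = a + N1 + N2 + S := by rw [ha_def]; ring
  rw [e1, e2, e3, gt_iff_lt, lt_min_iff]
  constructor
  · exact div_lt_div_of_pos_left ha0 (by linarith) (by linarith)
  · rw [div_lt_div_iff₀ (by linarith) (by linarith)]
    nlinarith [mul_nonneg ha0.le hS0, sq_nonneg ((N1:ℚ) - 1)]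
end

section
/- For all integers N ≥ 1 and T ≥ 2N, taking N1 = N2 = N one has min(R1, R2) = (T+1−2N)/(T+1−N); that is, R1 = (T+1−2N)/(T+1−N) and R2 ≥ R1, where R1 = (T+1−N1−N2)/(T+1−N2) and R2 = (T+1−N2)/(T+1+Σ_{i=0}^{N1} (N1−i)/(T+1−N2−(N1−i))). -/
lemma gauss_q (n : ℕ) : ∑ i ∈ Finset.range n, (i : ℚ) = n * (n - 1) / 2 := by
  induction n with
  | zero => simp
  | succ k ih => rw [Finset.sum_range_succ, ih]; push_cast; ring

theorem stmt_3 (N T : ℕ) (hN : 1 ≤ N) (hT : 2 * N ≤ T) :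
    ((T : ℚ) + 1 - N - N) / ((T : ℚ) + 1 - N) = ((T : ℚ) + 1 - 2 * N) / ((T : ℚ) + 1 - N) ∧
    ((T : ℚ) + 1 - N) /
        ((T : ℚ) + 1 + ∑ i ∈ Finset.range (N + 1),
          ((N : ℚ) - i) / ((T : ℚ) + 1 - N - ((N : ℚ) - i))) ≥
      ((T : ℚ) + 1 - N - N) / ((T : ℚ) + 1 - N) ∧
    min (((T : ℚ) + 1 - N - N) / ((T : ℚ) + 1 - N))
      (((T : ℚ) + 1 - N) /
        ((T : ℚ) + 1 + ∑ i ∈ Finset.range (N + 1),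
          ((N : ℚ) - i) / ((T : ℚ) + 1 - N - ((N : ℚ) - i)))) =
      ((T : ℚ) + 1 - 2 * N) / ((T : ℚ) + 1 - N) := by
  have hN1 : (1 : ℚ) ≤ (N : ℚ) := by exact_mod_cast hN
  have hT1 : (2 : ℚ) * N ≤ (T : ℚ) := by exact_mod_cast hT
  have hpos2 : (0 : ℚ) < (T : ℚ) + 1 - 2 * N := by linarith
  have hposN : (0 : ℚ) < (T : ℚ) + 1 - N := by linarith
  set S := ∑ i ∈ Finset.range (N + 1),
      ((N : ℚ) - i) / ((T : ℚ) + 1 - N - ((N : ℚ) - i)) with hSdef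
  have hterm : ∀ i ∈ Finset.range (N + 1),
      ((N : ℚ) - i) / ((T : ℚ) + 1 - N - ((N : ℚ) - i)) ≤
        ((N : ℚ) - i) / ((T : ℚ) + 1 - 2 * N) := by
    intro i hi
    have hi' : (i : ℚ) ≤ N := by
      exact_mod_cast Nat.lt_succ_iff.mp (Finset.mem_range.mp hi)
    have h0 : (0 : ℚ) ≤ (N : ℚ) - i := by linarith
    have hle : (T : ℚ) + 1 - 2 * N ≤ (T : ℚ) + 1 - N - ((N : ℚ) - i) := by linarith
    exact div_le_div_of_nonneg_left h0 hpos2 hle |>.trans_eq rfl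
  have hS0 : (0 : ℚ) ≤ S := by
    apply Finset.sum_nonneg
    intro i hi
    have hi' : (i : ℚ) ≤ N := by
      exact_mod_cast Nat.lt_succ_iff.mp (Finset.mem_range.mp hi)
    have h0 : (0 : ℚ) ≤ (N : ℚ) - i := by linarith
    have hd : (0 : ℚ) < (T : ℚ) + 1 - N - ((N : ℚ) - i) := by linarith
    positivity
  have hsum : ∑ i ∈ Finset.range (N + 1), ((N : ℚ) - i) = (N : ℚ) * (N + 1) / 2 := by
    rw [Finset.sum_sub_distrib, Finset.sum_const, Finset.card_range, gauss_q]
    push_cast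
    ring
  have hSle : S ≤ ((N : ℚ) * (N + 1) / 2) / ((T : ℚ) + 1 - 2 * N) := by
    calc S ≤ ∑ i ∈ Finset.range (N + 1), ((N : ℚ) - i) / ((T : ℚ) + 1 - 2 * N) :=
          Finset.sum_le_sum hterm
      _ = ((N : ℚ) * (N + 1) / 2) / ((T : ℚ) + 1 - 2 * N) := by
          rw [← Finset.sum_div, hsum]
  have hSN2 : ((T : ℚ) + 1 - 2 * N) * S ≤ (N : ℚ) ^ 2 := by
    have h1 : S * ((T : ℚ) + 1 - 2 * N) ≤ (N : ℚ) * (N + 1) / 2 :=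
      (le_div_iff₀ hpos2).mp hSle
    nlinarith [hN1]
  have hposTS : (0 : ℚ) < (T : ℚ) + 1 + S := by
    have : (0 : ℚ) ≤ (T : ℚ) := by positivity
    linarith
  have hmain : ((T : ℚ) + 1 - N - N) / ((T : ℚ) + 1 - N) ≤
      ((T : ℚ) + 1 - N) / ((T : ℚ) + 1 + S) := by
    rw [div_le_div_iff₀ hposN hposTS]
    nlinarith [hSN2]
  refine ⟨by ring_nf, hmain, ?_⟩
  rw [min_eq_left hmain]
  ring_nf
end

section
/- For all integers N1 ≥ 1, N2 ≥ 1, T ≥ N1+N2, with k = ∏_{i=0}^{N1} (T+1−N2−i), n1 = (T+1−N2)·∏_{i=0}^{N1−1} (T+1−N2−i), and n2 = (T+1−N1)·∏_{i=1}^{N1} (T+1−N2−i) + Σ_{l=1}^{N1} ∏_{i∈{0,…,N1}, i≠l} (T+1−N2−i), the following two identities of rational numbers hold: k/n1 = (T+1−N1−N2)/(T+1−N2) and k/n2 = (T+1−N2)/(T+1+Σ_{i=0}^{N1} (N1−i)/(T+1−N2−(N1−i))). -/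
theorem stmt_4 (N1 N2 T : ℕ) (hN1 : 1 ≤ N1) (hN2 : 1 ≤ N2) (hT : N1 + N2 ≤ T) :
    ((∏ i ∈ Finset.range (N1 + 1), (T + 1 - N2 - i) : ℕ) : ℚ) /
        (((T + 1 - N2) * ∏ i ∈ Finset.range N1, (T + 1 - N2 - i) : ℕ) : ℚ) =
      ((T : ℚ) + 1 - N1 - N2) / ((T : ℚ) + 1 - N2) ∧
    ((∏ i ∈ Finset.range (N1 + 1), (T + 1 - N2 - i) : ℕ) : ℚ) /
        (((T + 1 - N1) * ∏ i ∈ Finset.Icc 1 N1, (T + 1 - N2 - i) +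
          ∑ l ∈ Finset.Icc 1 N1, ∏ i ∈ (Finset.range (N1 + 1)).erase l, (T + 1 - N2 - i) : ℕ) : ℚ) =
      ((T : ℚ) + 1 - N2) /
        ((T : ℚ) + 1 + ∑ i ∈ Finset.range (N1 + 1),
          ((N1 : ℚ) - i) / ((T : ℚ) + 1 - N2 - ((N1 : ℚ) - i))) := by
  have hcast : ∀ i, i ≤ N1 → ((T + 1 - N2 - i : ℕ) : ℚ) = (T : ℚ) + 1 - N2 - i := by
    intro i hi
    have h1 : T + 1 - N2 - i = T + 1 - (N2 + i) := by omega
    rw [h1, Nat.cast_sub (by omega)]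
    push_cast; ring
  have hpos : ∀ i, i ≤ N1 → (0 : ℚ) < ((T + 1 - N2 - i : ℕ) : ℚ) := by
    intro i hi
    exact_mod_cast Nat.pos_of_ne_zero (by omega)
  have h0 : ((T + 1 - N2 : ℕ) : ℚ) = (T : ℚ) + 1 - N2 := by
    rw [Nat.cast_sub (by omega)]; push_cast; ring
  have h1 : ((T + 1 - N1 : ℕ) : ℚ) = (T : ℚ) + 1 - N1 := by
    rw [Nat.cast_sub (by omega)]; push_cast; ring
  have hins : Finset.range (N1 + 1) = insert 0 (Finset.Icc 1 N1) := by
    ext x; simp; omega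
  constructor
  · rw [Nat.cast_mul, Nat.cast_prod, Nat.cast_prod, Finset.prod_range_succ]
    have hP : (∏ i ∈ Finset.range N1, ((T + 1 - N2 - i : ℕ) : ℚ)) ≠ 0 :=
      Finset.prod_ne_zero_iff.mpr fun i hi =>
        ne_of_gt (hpos i (by simp at hi; omega))
    rw [mul_comm ((T + 1 - N2 : ℕ) : ℚ), mul_div_mul_left _ _ hP,
      hcast N1 le_rfl, h0]
    ring
  · -- reflect the sum
    have hsum : (∑ i ∈ Finset.range (N1 + 1),
        ((N1 : ℚ) - i) / ((T : ℚ) + 1 - N2 - ((N1 : ℚ) - i)))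
        = ∑ j ∈ Finset.range (N1 + 1), (j : ℚ) / ((T : ℚ) + 1 - N2 - j) := by
      rw [← Finset.sum_range_reflect (fun j => (j : ℚ) / ((T : ℚ) + 1 - N2 - j)) (N1 + 1)]
      apply Finset.sum_congr rfl
      intro i hi
      simp only [Finset.mem_range] at hi
      have h' : N1 + 1 - 1 - i = N1 - i := by omega
      have h'' : ((N1 - i : ℕ) : ℚ) = (N1 : ℚ) - i := by
        rw [Nat.cast_sub (by omega)]
      simp only [h', h'']
    rw [hsum]
    simp only [Nat.cast_add, Nat.cast_mul, Nat.cast_sum, Nat.cast_prod]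
    have hKE : ∀ l ∈ Finset.range (N1 + 1),
        ((T + 1 - N2 - l : ℕ) : ℚ) *
          (∏ i ∈ (Finset.range (N1 + 1)).erase l, ((T + 1 - N2 - i : ℕ) : ℚ))
        = ∏ i ∈ Finset.range (N1 + 1), ((T + 1 - N2 - i : ℕ) : ℚ) :=
      fun l hl => Finset.mul_prod_erase (Finset.range (N1 + 1))
        (fun i => ((T + 1 - N2 - i : ℕ) : ℚ)) hl
    have hK0 : (∏ i ∈ Finset.range (N1 + 1), ((T + 1 - N2 - i : ℕ) : ℚ))
        = ((T + 1 - N2 : ℕ) : ℚ) * ∏ i ∈ Finset.Icc 1 N1, ((T + 1 - N2 - i : ℕ) : ℚ) := by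
      rw [hins, Finset.prod_insert (by simp)]
      norm_num
    -- denominators nonzero
    have hden1 : (0 : ℚ) < ((T + 1 - N1 : ℕ) : ℚ) *
        ∏ i ∈ Finset.Icc 1 N1, ((T + 1 - N2 - i : ℕ) : ℚ) := by
      apply mul_pos
      · exact_mod_cast Nat.pos_of_ne_zero (by omega)
      · exact Finset.prod_pos fun i hi => hpos i (by simp at hi; omega)
    have hden2 : (0 : ℚ) ≤ ∑ l ∈ Finset.Icc 1 N1,
        ∏ i ∈ (Finset.range (N1 + 1)).erase l, ((T + 1 - N2 - i : ℕ) : ℚ) :=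
      Finset.sum_nonneg fun l hl => Finset.prod_nonneg fun i hi => by positivity
    have hn2 : (0 : ℚ) < ((T + 1 - N1 : ℕ) : ℚ) *
        (∏ i ∈ Finset.Icc 1 N1, ((T + 1 - N2 - i : ℕ) : ℚ)) +
        ∑ l ∈ Finset.Icc 1 N1,
          ∏ i ∈ (Finset.range (N1 + 1)).erase l, ((T + 1 - N2 - i : ℕ) : ℚ) :=
      add_pos_of_pos_of_nonneg hden1 hden2
    have hD : (0 : ℚ) < (T : ℚ) + 1 +
        ∑ j ∈ Finset.range (N1 + 1), (j : ℚ) / ((T : ℚ) + 1 - N2 - j) := by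
      have hs : (0 : ℚ) ≤ ∑ j ∈ Finset.range (N1 + 1), (j : ℚ) / ((T : ℚ) + 1 - N2 - j) := by
        apply Finset.sum_nonneg
        intro j hj
        simp only [Finset.mem_range] at hj
        have := hpos j (by omega)
        rw [hcast j (by omega)] at this
        positivity
      have : (0 : ℚ) < (T : ℚ) + 1 := by positivity
      linarith
    rw [div_eq_div_iff hn2.ne' hD.ne']
    -- key sum manipulation
    have hS : (∏ i ∈ Finset.range (N1 + 1), ((T + 1 - N2 - i : ℕ) : ℚ)) *
        (∑ j ∈ Finset.range (N1 + 1), (j : ℚ) / ((T : ℚ) + 1 - N2 - j))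
        = ∑ j ∈ Finset.Icc 1 N1, (j : ℚ) *
            ∏ i ∈ (Finset.range (N1 + 1)).erase j, ((T + 1 - N2 - i : ℕ) : ℚ) := by
      rw [Finset.mul_sum, hins, Finset.sum_insert (by simp)]
      simp only [Nat.cast_zero, zero_div, mul_zero, zero_add]
      apply Finset.sum_congr rfl
      intro j hj
      simp only [Finset.mem_Icc] at hj
      rw [← hins, ← hcast j hj.2, ← hKE j (by simp; omega)]
      have hQ := (hpos j hj.2).ne'
      field_simp
    have hM : ∀ j ∈ Finset.Icc 1 N1, ((T + 1 - N2 : ℕ) : ℚ) *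
        (∏ i ∈ (Finset.range (N1 + 1)).erase j, ((T + 1 - N2 - i : ℕ) : ℚ))
        = (∏ i ∈ Finset.range (N1 + 1), ((T + 1 - N2 - i : ℕ) : ℚ)) +
          (j : ℚ) * ∏ i ∈ (Finset.range (N1 + 1)).erase j, ((T + 1 - N2 - i : ℕ) : ℚ) := by
      intro j hj
      simp only [Finset.mem_Icc] at hj
      have hmj : ((T + 1 - N2 : ℕ) : ℚ) = ((T + 1 - N2 - j : ℕ) : ℚ) + j := by
        rw [hcast j hj.2, h0]; ring
      rw [hmj, ← hKE j (by simp; omega)]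
      ring
    have hRHS2 : ((T + 1 - N2 : ℕ) : ℚ) * ∑ l ∈ Finset.Icc 1 N1,
        ∏ i ∈ (Finset.range (N1 + 1)).erase l, ((T + 1 - N2 - i : ℕ) : ℚ)
        = (N1 : ℚ) * (∏ i ∈ Finset.range (N1 + 1), ((T + 1 - N2 - i : ℕ) : ℚ)) +
          ∑ l ∈ Finset.Icc 1 N1,
            (l : ℚ) * ∏ i ∈ (Finset.range (N1 + 1)).erase l, ((T + 1 - N2 - i : ℕ) : ℚ) := by
      rw [Finset.mul_sum]
      rw [Finset.sum_congr rfl hM, Finset.sum_add_distrib, Finset.sum_const,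
        Nat.card_Icc, Nat.add_sub_cancel, nsmul_eq_mul]
    rw [h1]
    rw [h0] at hK0 hRHS2
    linear_combination hS - hRHS2 + ((T : ℚ) + 1 - (N1 : ℚ)) * hK0
end

section
/- Let T, N1, N2, i*, j* be integers with T ≥ N1 + N2, N1 ≥ 1, 0 ≤ j* ≤ N1 − 1, j* ≤ i* ≤ T, and i* − j* ≤ T − N1 − N2, and let k be a positive rational. Let α : {1,…,T} → ℚ satisfy: α_i ≥ 0 for all i; Σ_{i=1}^{i*} α_i = (i* − j*)·k/(T+1−N1−N2); α_i ≤ k/(T+1−N2−j*) for all 1 ≤ i ≤ i*; and α_i ≥ k/(T−N2−j*) for all i* < i ≤ T. Then for every subset I ⊆ {1,…,T} with |{1,…,T} \setminus I| ≤ N2, one has Σ_{i∈I} α_i ≥ k. -/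
theorem stmt_10 (T N1 N2 istar jstar : ℤ) (hT : N1 + N2 ≤ T) (hN1 : 1 ≤ N1)
    (hj0 : 0 ≤ jstar) (hj1 : jstar ≤ N1 - 1) (hij : jstar ≤ istar) (hiT : istar ≤ T)
    (hik : istar - jstar ≤ T - N1 - N2)
    (k : ℚ) (hk : 0 < k) (α : ℤ → ℚ)
    (hα0 : ∀ i ∈ Finset.Icc (1 : ℤ) T, 0 ≤ α i)
    (hsum : ∑ i ∈ Finset.Icc (1 : ℤ) istar, α i =
      ((istar - jstar : ℤ) : ℚ) * k / ((T : ℚ) + 1 - N1 - N2))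
    (hub : ∀ i ∈ Finset.Icc (1 : ℤ) istar, α i ≤ k / ((T : ℚ) + 1 - N2 - jstar))
    (hlb : ∀ i : ℤ, istar < i → i ≤ T → α i ≥ k / ((T : ℚ) - N2 - jstar))
    (I : Finset ℤ) (hI : I ⊆ Finset.Icc (1 : ℤ) T)
    (hcard : ((Finset.Icc (1 : ℤ) T \ I).card : ℤ) ≤ N2) :
    ∑ i ∈ I, α i ≥ k := by
  classical
  set A : Finset ℤ := Finset.Icc (1 : ℤ) istar with hAdef
  set B : Finset ℤ := Finset.Icc (istar + 1) T with hBdef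
  have hi0 : 0 ≤ istar := le_trans hj0 hij
  -- denominators
  have hd1 : (0 : ℤ) < T + 1 - N1 - N2 := by omega
  have hd2 : (0 : ℤ) < T + 1 - N2 - jstar := by omega
  have hd3 : (0 : ℤ) < T - N2 - jstar := by omega
  have hD1 : (0 : ℚ) < (T : ℚ) + 1 - N1 - N2 := by exact_mod_cast hd1
  have hD2 : (0 : ℚ) < (T : ℚ) + 1 - N2 - jstar := by exact_mod_cast hd2
  have hD3 : (0 : ℚ) < (T : ℚ) - N2 - jstar := by exact_mod_cast hd3
  -- splitting the index set
  have hSAB : Finset.Icc (1 : ℤ) T = A ∪ B := by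
    ext x; simp only [hAdef, hBdef, Finset.mem_Icc, Finset.mem_union]; omega
  have hABdisj : Disjoint A B := by
    simp only [Finset.disjoint_left, hAdef, hBdef, Finset.mem_Icc]
    intro x hx hx'; omega
  have hIA : I \ A = I ∩ B := by
    ext x
    simp only [Finset.mem_sdiff, Finset.mem_inter]
    constructor
    · rintro ⟨hx, hxa⟩
      refine ⟨hx, ?_⟩
      have hxS := hI hx
      simp only [Finset.mem_Icc] at hxS
      simp only [hAdef, Finset.mem_Icc] at hxa
      simp only [hBdef, Finset.mem_Icc]
      omega
    · rintro ⟨hx, hxb⟩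
      refine ⟨hx, ?_⟩
      simp only [hBdef, Finset.mem_Icc] at hxb
      simp only [hAdef, Finset.mem_Icc]
      omega
  have hsplitI : ∑ i ∈ I, α i = ∑ i ∈ I ∩ A, α i + ∑ i ∈ I ∩ B, α i := by
    rw [← Finset.sum_inter_add_sum_sdiff I A α, hIA]
  -- cardinalities
  set e1 : ℕ := (A \ I).card with he1def
  set e2 : ℕ := (B \ I).card with he2def
  set m : ℕ := (I ∩ B).card with hmdef
  have hIB : I ∩ B = B ∩ I := Finset.inter_comm I B
  have hmB : (m : ℤ) + e2 = T - istar := by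
    have h1 : (B ∩ I).card + (B \ I).card = B.card := Finset.card_inter_add_card_sdiff B I
    have h2 : B.card = (T - istar).toNat := by
      rw [hBdef, Int.card_Icc]; congr 1; omega
    have h3 : ((T - istar).toNat : ℤ) = T - istar := Int.toNat_of_nonneg (by omega)
    rw [hmdef, hIB]
    omega
  have he12 : (e1 : ℤ) + e2 ≤ N2 := by
    have hsub : (A \ I) ∪ (B \ I) = Finset.Icc (1 : ℤ) T \ I := by
      rw [hSAB, Finset.union_sdiff_distrib]
    have hdisj : Disjoint (A \ I) (B \ I) :=
      hABdisj.mono (Finset.sdiff_subset) (Finset.sdiff_subset)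
    have := Finset.card_union_of_disjoint hdisj
    rw [hsub] at this
    omega
  -- sum bounds
  have hsumA : ∑ i ∈ I ∩ A, α i ≥
      ((istar - jstar : ℤ) : ℚ) * k / ((T : ℚ) + 1 - N1 - N2)
        - (e1 : ℚ) * (k / ((T : ℚ) + 1 - N2 - jstar)) := by
    have hA1 : ∑ i ∈ A ∩ I, α i + ∑ i ∈ A \ I, α i = ∑ i ∈ A, α i :=
      Finset.sum_inter_add_sum_sdiff A I α
    have hA2 : ∑ i ∈ A \ I, α i ≤ e1 • (k / ((T : ℚ) + 1 - N2 - jstar)) :=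
      Finset.sum_le_card_nsmul _ _ _ (fun x hx => hub x (Finset.mem_sdiff.mp hx).1)
    rw [nsmul_eq_mul] at hA2
    rw [Finset.inter_comm]
    rw [hAdef] at hA1
    rw [hsum] at hA1
    linarith
  have hsumB : ∑ i ∈ I ∩ B, α i ≥ (m : ℚ) * (k / ((T : ℚ) - N2 - jstar)) := by
    have := Finset.card_nsmul_le_sum (I ∩ B) α (k / ((T : ℚ) - N2 - jstar))
      (fun x hx => by
        have hxb := (Finset.mem_inter.mp hx).2
        simp only [hBdef, Finset.mem_Icc] at hxb
        exact hlb x (by omega) hxb.2)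
    rwa [nsmul_eq_mul, ← hmdef] at this
  -- key integer inequality
  have hkey : (T + 1 - N1 - N2) * ((T + 1 - N2 - jstar) * (T - N2 - jstar)) ≤
      (istar - jstar) * ((T + 1 - N2 - jstar) * (T - N2 - jstar))
        - (e1 : ℤ) * ((T + 1 - N1 - N2) * (T - N2 - jstar))
        + (T - istar - e2) * ((T + 1 - N1 - N2) * (T + 1 - N2 - jstar)) := by
    nlinarith [mul_nonneg (mul_nonneg (by omega : (0:ℤ) ≤ istar - jstar) hd2.le)
        (by omega : (0:ℤ) ≤ (T - N2 - jstar) - (T + 1 - N1 - N2)),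
      mul_nonneg (mul_nonneg (by omega : (0:ℤ) ≤ N2 - e2 - e1) hd1.le) hd2.le,
      mul_nonneg (by positivity : (0:ℤ) ≤ (e1 : ℤ)) hd1.le]
  -- final arithmetic in ℚ
  have hm : (m : ℚ) = (T : ℚ) - istar - e2 := by
    have h : (m : ℤ) = T - istar - e2 := by omega
    have h2 : ((m : ℤ) : ℚ) = ((T - istar - e2 : ℤ) : ℚ) := by rw [h]
    push_cast at h2
    push_cast
    linarith
  have hkeyQ : ((T : ℚ) + 1 - N1 - N2) * (((T : ℚ) + 1 - N2 - jstar) * ((T : ℚ) - N2 - jstar)) ≤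
      ((istar : ℚ) - jstar) * (((T : ℚ) + 1 - N2 - jstar) * ((T : ℚ) - N2 - jstar))
        - (e1 : ℚ) * (((T : ℚ) + 1 - N1 - N2) * ((T : ℚ) - N2 - jstar))
        + ((T : ℚ) - istar - e2) * (((T : ℚ) + 1 - N1 - N2) * ((T : ℚ) + 1 - N2 - jstar)) := by
    exact_mod_cast hkey
  have hfinal : k ≤ ((istar - jstar : ℤ) : ℚ) * k / ((T : ℚ) + 1 - N1 - N2)
      - (e1 : ℚ) * (k / ((T : ℚ) + 1 - N2 - jstar))
      + (m : ℚ) * (k / ((T : ℚ) - N2 - jstar)) := by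
    rw [← sub_nonneg]
    have heq : ((istar - jstar : ℤ) : ℚ) * k / ((T : ℚ) + 1 - N1 - N2)
        - (e1 : ℚ) * (k / ((T : ℚ) + 1 - N2 - jstar))
        + (m : ℚ) * (k / ((T : ℚ) - N2 - jstar)) - k =
        k * (((istar : ℚ) - jstar) * (((T : ℚ) + 1 - N2 - jstar) * ((T : ℚ) - N2 - jstar))
          - (e1 : ℚ) * (((T : ℚ) + 1 - N1 - N2) * ((T : ℚ) - N2 - jstar))
          + ((T : ℚ) - istar - e2) * (((T : ℚ) + 1 - N1 - N2) * ((T : ℚ) + 1 - N2 - jstar))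
          - ((T : ℚ) + 1 - N1 - N2) * (((T : ℚ) + 1 - N2 - jstar) * ((T : ℚ) - N2 - jstar)))
          / (((T : ℚ) + 1 - N1 - N2) * (((T : ℚ) + 1 - N2 - jstar) * ((T : ℚ) - N2 - jstar))) := by
      rw [hm]
      push_cast
      field_simp
    rw [heq]
    apply div_nonneg
    · apply mul_nonneg hk.le
      linarith
    · positivity
  rw [hsplitI]
  linarith
end

section
/- Let F be a finite field and fix an (N1,N2,T)-achievable (n1,n2,k,T) streaming code over F. Fix t ∈ ℕ, and let e_S, e_R : ℕ → {0,1} be erasure sequences with e_S(t') = 0 and e_R(t') = 0 for all t' outside [t, t+T], satisfying: Σ_{t'=t}^{t+T} e_S(t') ≤ N1; Σ_{t'=t}^{t+T} e_R(t') ≤ N2 if e_S(t) = 0; and Σ_{t'=t+1}^{t+T} e_R(t') ≤ N2 if e_S(t) = 1. Then for any two message sequences m, m' : ℕ → F^k with m(t') = m'(t') for all t' < t, if the induced received sequences satisfy y_D(t') = y'_D(t') for all 0 ≤ t' ≤ t+T, then m(t) = m'(t). (In particular, when e_S(t) = 1, the message m(t) is recoverable even though up to N2 + 1 relay-to-destination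 erasures occur in the window [t, t+T].) -/
/-- An `(n1, n2, k, T)` streaming code over an alphabet `F`:
source encoders, relay encoders and delay-`T` decoders. -/
structure StreamingCode (F : Type*) (n1 n2 k T : ℕ) where
  enc : (t : ℕ) → (Fin (t + 1) → (Fin k → F)) → (Fin n1 → F)
  rel : (t : ℕ) → (Fin (t + 1) → Option (Fin n1 → F)) → (Fin n2 → F)
  dec : (t : ℕ) → (Fin (t + T + 1) → Option (Fin n2 → F)) → (Fin k → F)

namespace StreamingCode

variable {F : Type*} {n1 n2 k T : ℕ}

/-- Source packet at time `t`. -/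
def x (C : StreamingCode F n1 n2 k T) (m : ℕ → Fin k → F) (t : ℕ) : Fin n1 → F :=
  C.enc t (fun i => m i)

/-- Packet received by the relay (with erasures `eS`). -/
def xR (C : StreamingCode F n1 n2 k T) (m : ℕ → Fin k → F) (eS : ℕ → ℕ) (t : ℕ) :
    Option (Fin n1 → F) :=
  if eS t = 1 then none else some (C.x m t)

/-- Relay packet at time `t`. -/
def y (C : StreamingCode F n1 n2 k T) (m : ℕ → Fin k → F) (eS : ℕ → ℕ) (t : ℕ) :
    Fin n2 → F :=
  C.rel t (fun i => C.xR m eS i)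

/-- Packet received by the destination (with erasures `eR`). -/
def yD (C : StreamingCode F n1 n2 k T) (m : ℕ → Fin k → F) (eS eR : ℕ → ℕ) (t : ℕ) :
    Option (Fin n2 → F) :=
  if eR t = 1 then none else some (C.y m eS t)

/-- `(N1, N2, T)`-achievability: every message packet is decoded by its deadline under any
`N1`-erasure sequence on the first link and any `N2`-erasure sequence on the second link. -/
def Achievable (C : StreamingCode F n1 n2 k T) (N1 N2 : ℕ) : Prop :=
  ∀ (m : ℕ → Fin k → F) (eS eR : ℕ → ℕ),
    (∀ t, eS t ≤ 1) → (∀ t, eR t ≤ 1) →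
    (∀ n, ∑ t ∈ Finset.range n, eS t ≤ N1) →
    (∀ n, ∑ t ∈ Finset.range n, eR t ≤ N2) →
    ∀ t, C.dec t (fun i => C.yD m eS eR i) = m t

end StreamingCode

theorem stmt_11 {F : Type} [Field F] [Fintype F] {N1 N2 T n1 n2 k : ℕ}
    (C : StreamingCode F n1 n2 k T) (hC : C.Achievable N1 N2)
    (t : ℕ) (eS eR : ℕ → ℕ)
    (heS1 : ∀ t', eS t' ≤ 1) (heR1 : ∀ t', eR t' ≤ 1)
    (hsupS : ∀ t', t' ∉ Finset.Icc t (t + T) → eS t' = 0)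
    (hsupR : ∀ t', t' ∉ Finset.Icc t (t + T) → eR t' = 0)
    (h1 : ∑ t' ∈ Finset.Icc t (t + T), eS t' ≤ N1)
    (h2 : eS t = 0 → ∑ t' ∈ Finset.Icc t (t + T), eR t' ≤ N2)
    (h3 : eS t = 1 → ∑ t' ∈ Finset.Icc (t + 1) (t + T), eR t' ≤ N2)
    (m m' : ℕ → Fin k → F) (hm : ∀ t' < t, m t' = m' t')
    (hy : ∀ t' ≤ t + T, C.yD m eS eR t' = C.yD m' eS eR t') :
    m t = m' t := by
  classical
  set eR' : ℕ → ℕ := fun s => if s = t ∧ eS t = 1 then 0 else eR s with heR'def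
  have hx : ∀ j < t, C.x m j = C.x m' j := by
    intro j hj
    have harg : (fun i : Fin (j + 1) => m i.val) = (fun i : Fin (j + 1) => m' i.val) := by
      funext i
      exact hm i (Nat.lt_of_le_of_lt (Nat.le_of_lt_succ i.isLt) hj)
    unfold StreamingCode.x
    rw [harg]
  have hyt : eS t = 1 → C.y m eS t = C.y m' eS t := by
    intro hst
    have harg : (fun i : Fin (t + 1) => C.xR m eS i.val)
        = (fun i : Fin (t + 1) => C.xR m' eS i.val) := by
      funext i
      unfold StreamingCode.xR
      by_cases hi : eS i.val = 1
      · simp [hi]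
      · have hit : i.val ≠ t := by
          intro h; rw [h] at hi; exact hi hst
        have : i.val < t := lt_of_le_of_ne (Nat.le_of_lt_succ i.isLt) hit
        simp [hi, hx _ this]
    unfold StreamingCode.y
    rw [harg]
  have heR'1 : ∀ s, eR' s ≤ 1 := by
    intro s; simp only [heR'def]
    split
    · exact Nat.zero_le 1
    · exact heR1 s
  have hsupR' : ∀ s, s ∉ Finset.Icc t (t + T) → eR' s = 0 := by
    intro s hs; simp only [heR'def]
    split
    · rfl
    · exact hsupR s hs
  have hS : ∀ n, ∑ s ∈ Finset.range n, eS s ≤ N1 := by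
    intro n
    calc ∑ s ∈ Finset.range n, eS s
        = ∑ s ∈ Finset.range n ∩ Finset.Icc t (t + T), eS s := by
          refine (Finset.sum_subset Finset.inter_subset_left ?_).symm
          intro s hs hns
          exact hsupS s (fun h => hns (Finset.mem_inter.mpr ⟨hs, h⟩))
      _ ≤ ∑ s ∈ Finset.Icc t (t + T), eS s :=
          Finset.sum_le_sum_of_subset Finset.inter_subset_right
      _ ≤ N1 := h1
  have hIccR' : ∑ s ∈ Finset.Icc t (t + T), eR' s ≤ N2 := by
    by_cases hst : eS t = 1
    · have hsplit : Finset.Icc t (t + T) = insert t (Finset.Icc (t + 1) (t + T)) := by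
        ext s
        simp only [Finset.mem_Icc, Finset.mem_insert]
        omega
      rw [hsplit, Finset.sum_insert (by simp)]
      have h0 : eR' t = 0 := by simp [heR'def, hst]
      have heq : ∑ s ∈ Finset.Icc (t + 1) (t + T), eR' s
          = ∑ s ∈ Finset.Icc (t + 1) (t + T), eR s := by
        refine Finset.sum_congr rfl ?_
        intro s hs
        have : s ≠ t := by
          have := (Finset.mem_Icc.mp hs).1; omega
        simp [heR'def, this]
      rw [h0, heq]
      simpa using h3 hst
    · have hst0 : eS t = 0 := by have := heS1 t; omega
      have heq : ∀ s, eR' s = eR s := by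
        intro s; simp [heR'def, hst]
      simp only [heq]
      exact h2 hst0
  have hR : ∀ n, ∑ s ∈ Finset.range n, eR' s ≤ N2 := by
    intro n
    calc ∑ s ∈ Finset.range n, eR' s
        = ∑ s ∈ Finset.range n ∩ Finset.Icc t (t + T), eR' s := by
          refine (Finset.sum_subset Finset.inter_subset_left ?_).symm
          intro s hs hns
          exact hsupR' s (fun h => hns (Finset.mem_inter.mpr ⟨hs, h⟩))
      _ ≤ ∑ s ∈ Finset.Icc t (t + T), eR' s :=
          Finset.sum_le_sum_of_subset Finset.inter_subset_right
      _ ≤ N2 := hIccR'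
  have hyD : ∀ i ≤ t + T, C.yD m eS eR' i = C.yD m' eS eR' i := by
    intro i hi
    by_cases hit : i = t ∧ eS t = 1
    · have h0 : eR' i = 0 := by simp [heR'def, hit]
      obtain ⟨rfl, hst⟩ := hit
      simp [StreamingCode.yD, h0, hyt hst]
    · have heq : eR' i = eR i := by simp [heR'def, hit]
      by_cases hri : eR i = 1
      · simp [StreamingCode.yD, heq, hri]
      · have := hy i hi
        simp only [StreamingCode.yD, hri, if_neg, heq] at this ⊢
        simpa using this
  have d1 := hC m eS eR' heS1 heR'1 hS hR t
  have d2 := hC m' eS eR' heS1 heR'1 hS hR t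
  have hfun : (fun i : Fin (t + T + 1) => C.yD m eS eR' i)
      = (fun i : Fin (t + T + 1) => C.yD m' eS eR' i) := by
    funext i
    exact hyD i (Nat.le_of_lt_succ i.isLt)
  rw [← d1, ← d2, hfun]
end

section
/- Let F be any finite field and let N1, N2, T be nonnegative integers with N1 + N2 > T. Then every (N1,N2,T)-achievable (n1,n2,k,T) streaming code over F has k = 0; that is, the (N1,N2,T)-capacity is zero when N1 + N2 > T. -/
theorem stmt_16 {F : Type} [Field F] [Fintype F] (N1 N2 T n1 n2 k : ℕ)
    (h : T < N1 + N2) (C : StreamingCode F n1 n2 k T) (hC : C.Achievable N1 N2) :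
    k = 0 := by
  by_contra hk
  have hk' : 0 < k := Nat.pos_of_ne_zero hk
  set eS : ℕ → ℕ := fun t => if t < N1 then 1 else 0 with heS
  set eR : ℕ → ℕ := fun t => if N1 ≤ t ∧ t < N1 + N2 then 1 else 0 with heR
  have heS1 : ∀ t, eS t ≤ 1 := by intro t; simp only [eS]; split <;> simp
  have heR1 : ∀ t, eR t ≤ 1 := by intro t; simp only [eR]; split <;> simp
  have hS : ∀ n, ∑ t ∈ Finset.range n, eS t ≤ N1 := by
    intro n
    have h1 : ∑ t ∈ Finset.range n, eS t
        = ((Finset.range n).filter (fun t => t < N1)).card := by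
      simp [eS, Finset.sum_ite, Finset.sum_const]
    rw [h1]
    calc ((Finset.range n).filter (fun t => t < N1)).card
        ≤ (Finset.range N1).card := by
          apply Finset.card_le_card
          intro x hx
          simp only [Finset.mem_filter, Finset.mem_range] at hx ⊢
          exact hx.2
      _ = N1 := Finset.card_range N1
  have hR : ∀ n, ∑ t ∈ Finset.range n, eR t ≤ N2 := by
    intro n
    have h1 : ∑ t ∈ Finset.range n, eR t
        = ((Finset.range n).filter (fun t => N1 ≤ t ∧ t < N1 + N2)).card := by
      simp [eR, Finset.sum_ite, Finset.sum_const]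
    rw [h1]
    calc ((Finset.range n).filter (fun t => N1 ≤ t ∧ t < N1 + N2)).card
        ≤ (Finset.Ico N1 (N1 + N2)).card := by
          apply Finset.card_le_card
          intro x hx
          simp only [Finset.mem_filter, Finset.mem_range, Finset.mem_Ico] at hx ⊢
          exact hx.2
      _ = N2 := by rw [Nat.card_Ico]; omega
  set m0 : ℕ → Fin k → F := fun _ _ => 0 with hm0
  set m1 : ℕ → Fin k → F := fun t => if t = 0 then (fun _ => 1) else (fun _ => 0) with hm1
  have hinp : (fun i : Fin (0 + T + 1) => C.yD m0 eS eR i)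
      = (fun i : Fin (0 + T + 1) => C.yD m1 eS eR i) := by
    funext i
    have hi : (i : ℕ) < N1 + N2 := by
      have := i.isLt
      omega
    by_cases hiN : (i : ℕ) < N1
    · have heRi : eR i = 0 := by simp [eR]; omega
      have harg : (fun j : Fin ((i : ℕ) + 1) => C.xR m0 eS j)
          = (fun j : Fin ((i : ℕ) + 1) => C.xR m1 eS j) := by
        funext j
        have hj : eS (j : ℕ) = 1 := by
          have : (j : ℕ) < N1 := by have := j.isLt; omega
          simp [eS, this]
        simp [StreamingCode.xR, hj]
      have hy : C.y m0 eS i = C.y m1 eS i := by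
        unfold StreamingCode.y
        rw [harg]
      simp [StreamingCode.yD, heRi, hy]
    · have heRi : eR i = 1 := by simp [eR]; omega
      simp [StreamingCode.yD, heRi]
  have h0 := hC m0 eS eR heS1 heR1 hS hR 0
  have h1 := hC m1 eS eR heS1 heR1 hS hR 0
  rw [hinp] at h0
  rw [h0] at h1
  have : (0 : F) = 1 := congrFun h1 ⟨0, hk'⟩
  exact zero_ne_one this
end
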